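/- Let p > 1 be real, l ≥ 2 an integer, and n₁, n_k positive integers with n₁ + n_k = 2l + 1, n₁ ≤ l − 1, n_k ≥ l + 2 (so n₁n_k ≤ (l−1)(l+2)). Let a₁, a_k > 0, set c = n₁a₁^p + n_k a_k^p and b = (c/(2l+1))^{1/p}. If moreover p > 9/8, then l(l+1)·b² > n₁·n_k·a₁·a_k. -/

import Mathlib

set_option maxHeartbeats 1000000

theorem stmt_14 (p : ℝ) (hp : 1 < p) (l n₁ nk : ℕ) (hl : 2 ≤ l)
    (hn₁ : 0 < n₁) (hnk : 0 < nk) (hsum : n₁ + nk = 2 * l + 1)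
    (hn₁l : n₁ ≤ l - 1) (hnkl : l + 2 ≤ nk)
    (a₁ ak : ℝ) (ha₁ : 0 < a₁) (hak : 0 < ak)
    (c b : ℝ) (hc : c = n₁ * a₁ ^ p + nk * ak ^ p)
    (hb : b = (c / (2 * (l : ℝ) + 1)) ^ (1 / p))
    (hp9 : 9 / 8 < p) :
    (l : ℝ) * ((l : ℝ) + 1) * b ^ 2 > (n₁ : ℝ) * nk * a₁ * ak := by
  have hpp : (0:ℝ) < p := by linarith
  set L : ℝ := (l : ℝ) with hL
  have hl2 : (2:ℝ) ≤ L := by rw [hL]; exact_mod_cast hl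
  have hn1R : (1:ℝ) ≤ (n₁:ℝ) := by exact_mod_cast hn₁
  have hnkR : (1:ℝ) ≤ (nk:ℝ) := by exact_mod_cast hnk
  have hsumR : (n₁:ℝ) + (nk:ℝ) = 2*L + 1 := by
    have : ((n₁ + nk : ℕ):ℝ) = ((2*l+1 : ℕ):ℝ) := by rw [hsum]
    push_cast at this
    rw [hL]; linarith
  have hn₁lR : (n₁:ℝ) ≤ L - 1 := by
    have h1 : n₁ + 1 ≤ l := by omega
    have := (Nat.cast_le (α := ℝ)).2 h1
    push_cast at this; linarith
  have hnklR : L + 2 ≤ (nk:ℝ) := by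
    have := (Nat.cast_le (α := ℝ)).2 hnkl
    push_cast at this; linarith
  set Q : ℝ := (L-1)*(L+2) with hQ
  have hQ4 : (4:ℝ) ≤ Q := by nlinarith
  have hQpos : (0:ℝ) < Q := by linarith
  set m : ℝ := (n₁:ℝ) * (nk:ℝ) with hm
  have hmpos : 0 < m := by positivity
  have hmQ : m ≤ Q := by nlinarith [mul_nonneg (sub_nonneg.2 hn₁lR) (sub_nonneg.2 hnklR)]
  have ha1p : 0 < a₁ ^ p := Real.rpow_pos_of_pos ha₁ p
  have hakp : 0 < ak ^ p := Real.rpow_pos_of_pos hak p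
  have hn1pos : (0:ℝ) < n₁ := by linarith
  have hnkpos : (0:ℝ) < nk := by linarith
  have hcpos : 0 < c := by rw [hc]; positivity
  have hden : (0:ℝ) < 2*L + 1 := by linarith
  -- AM-GM : 4 m (a₁ ak)^p ≤ c²
  have hAM : 4 * m * (a₁*ak) ^ p ≤ c ^ 2 := by
    have h1 : (a₁*ak) ^ p = a₁ ^ p * ak ^ p := Real.mul_rpow ha₁.le hak.le
    rw [hc, h1, hm]
    nlinarith [sq_nonneg ((n₁:ℝ) * a₁ ^ p - (nk:ℝ) * ak ^ p)]
  -- b² as an rpow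
  have hb2 : b ^ 2 = (c ^ 2 / (2*L+1) ^ 2) ^ (1/p) := by
    have h0 : (0:ℝ) ≤ c / (2*L+1) := by positivity
    rw [hb, ← Real.rpow_natCast ((c / (2*L+1)) ^ (1/p)) 2, ← Real.rpow_mul h0]
    rw [show (1/p) * ((2:ℕ):ℝ) = 2 * (1/p) by push_cast; ring]
    rw [Real.rpow_mul h0, Real.rpow_two, ← div_pow]
  -- lower bound on b²
  have hstep : (4*m/(2*L+1)^2) ^ (1/p) * (a₁*ak) ≤ b ^ 2 := by
    rw [hb2]
    have h1 : (4*m/(2*L+1)^2) ^ (1/p) * (a₁*ak)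
        = (4*m/(2*L+1)^2 * (a₁*ak) ^ p) ^ (1/p) := by
      rw [Real.mul_rpow (by positivity) (by positivity)]
      congr 1
      rw [← Real.rpow_mul (by positivity : (0:ℝ) ≤ a₁*ak), mul_one_div,
        div_self hpp.ne', Real.rpow_one]
    rw [h1]
    apply Real.rpow_le_rpow (by positivity) _ (by positivity)
    rw [div_mul_eq_mul_div, div_le_div_iff₀ (by positivity) (by positivity)]
    exact mul_le_mul_of_nonneg_right hAM (by positivity)
  -- key inequality
  have hLL : L * (L+1) = Q + 2 := by rw [hQ]; ring
  have hLLpos : 0 < L * (L+1) := mul_pos (by linarith) (by linarith)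
  have hQp1 : (0:ℝ) < Q ^ (p-1) := Real.rpow_pos_of_pos hQpos _
  have hbern : Q ^ p * (1 + p * (2/Q)) ≤ (Q+2) ^ p := by
    have h2 : (1 + p * (2/Q)) ≤ (1 + 2/Q) ^ p := by
      apply one_add_mul_self_le_rpow_one_add _ hp.le
      have : (0:ℝ) < 2/Q := by positivity
      linarith
    have h3 : (Q+2) ^ p = Q ^ p * (1 + 2/Q) ^ p := by
      rw [← Real.mul_rpow hQpos.le (by positivity)]
      congr 1
      field_simp
    rw [h3]
    exact mul_le_mul_of_nonneg_left h2 (Real.rpow_pos_of_pos hQpos p).le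
  have hQsplit : Q ^ p = Q ^ (p-1) * Q := by
    conv_lhs => rw [show p = (p-1)+1 by ring, Real.rpow_add hQpos, Real.rpow_one]
  have hmp : m ^ p = m * m ^ (p-1) := by
    conv_lhs => rw [show p = 1+(p-1) by ring, Real.rpow_add hmpos, Real.rpow_one]
  have hmQp : m ^ (p-1) ≤ Q ^ (p-1) := Real.rpow_le_rpow hmpos.le hmQ (by linarith)
  have hkey : (m / (L*(L+1))) ^ p < 4*m/(2*L+1)^2 := by
    rw [Real.div_rpow hmpos.le hLLpos.le, hLL]
    rw [div_lt_div_iff₀ (Real.rpow_pos_of_pos (by linarith) p) (by positivity)]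
    have hsq : (2*L+1)^2 = 4*Q + 9 := by rw [hQ]; ring
    rw [hsq]
    have h4 : m ^ p * (4*Q+9) ≤ m * Q ^ (p-1) * (4*Q+9) := by
      rw [hmp]
      have h4a : m * m ^ (p-1) ≤ m * Q ^ (p-1) :=
        mul_le_mul_of_nonneg_left hmQp hmpos.le
      exact mul_le_mul_of_nonneg_right h4a (by linarith)
    have h5 : m * Q ^ (p-1) * (4*Q+9) < m * Q ^ (p-1) * (4*Q+8*p) := by
      have h5a : (4*Q+9) < 4*Q+8*p := by linarith
      have hpos : 0 < m * Q ^ (p-1) := mul_pos hmpos hQp1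
      exact mul_lt_mul_of_pos_left h5a hpos
    have h6 : m * Q ^ (p-1) * (4*Q+8*p) ≤ 4 * m * (Q+2) ^ p := by
      have : Q ^ (p-1) * (4*Q+8*p) = 4 * (Q ^ p * (1 + p * (2/Q))) := by
        rw [hQsplit]; field_simp; ring
      calc m * Q ^ (p-1) * (4*Q+8*p) = m * (Q ^ (p-1) * (4*Q+8*p)) := by ring
        _ = m * (4 * (Q ^ p * (1 + p * (2/Q)))) := by rw [this]
        _ ≤ m * (4 * (Q+2) ^ p) := by
              apply mul_le_mul_of_nonneg_left _ hmpos.le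
              exact mul_le_mul_of_nonneg_left hbern (by norm_num)
        _ = 4 * m * (Q+2) ^ p := by ring
    linarith
  -- combine
  have hmono : m / (L*(L+1)) < (4*m/(2*L+1)^2) ^ (1/p) := by
    have h7 : m / (L*(L+1)) = ((m / (L*(L+1))) ^ p) ^ (1/p) := by
      rw [← Real.rpow_mul (by positivity), mul_one_div, div_self hpp.ne', Real.rpow_one]
    rw [h7]
    exact Real.rpow_lt_rpow (by positivity) hkey (by positivity)
  have haak : 0 < a₁ * ak := by positivity
  have : m * (a₁ * ak) < L * (L+1) * b ^ 2 := by
    have h8 : m / (L*(L+1)) * (a₁*ak) < (4*m/(2*L+1)^2) ^ (1/p) * (a₁*ak) :=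
      mul_lt_mul_of_pos_right hmono haak
    have h9 := h8.trans_le hstep
    rw [div_mul_eq_mul_div, div_lt_iff₀ hLLpos] at h9
    linarith [h9]
  calc (n₁:ℝ) * nk * a₁ * ak = m * (a₁ * ak) := by rw [hm]; ring
    _ < L * (L+1) * b ^ 2 := this
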